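/- Let d ≥ 1 and let A be a d×d complex matrix. For every pair of indices i ≠ j such that the entry A_{ij} is nonzero, the matrix unit E_{ij} (the matrix with entry 1 at position (i,j) and 0 elsewhere) belongs to the complex Lie subalgebra of gl(d,ℂ) generated by the set of all diagonal matrices together with A. Consequently this generated Lie subalgebra contains the direct sum of the space of all diagonal matrices and the one-dimensional root spaces ℂ·E_{ij} for all pairs (i,j) in the index set I of nonzero off-diagonal entries of A. -/

import Mathlib

attribute [local instance 100] LieRing.ofAssociativeRing

open Matrix in
lemma stmt0_lmul {d : ℕ} (i k l : Fin d) (M : Matrix (Fin d) (Fin d) ℂ) :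
    (Matrix.single i i (1 : ℂ) * M) k l = if k = i then M i l else 0 := by
  simp [mul_apply, Matrix.single, ite_and, eq_comm]

open Matrix in
lemma stmt0_rmul {d : ℕ} (i k l : Fin d) (M : Matrix (Fin d) (Fin d) ℂ) :
    (M * Matrix.single i i (1 : ℂ)) k l = if l = i then M k i else 0 := by
  simp [mul_apply, Matrix.single, ite_and, eq_comm]

open Matrix in
lemma stmt0_lieE {d : ℕ} (i k l : Fin d) (M : Matrix (Fin d) (Fin d) ℂ) :
    ⁅Matrix.single i i (1 : ℂ), M⁆ k l =
      (if k = i then M i l else 0) - (if l = i then M k i else 0) := by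
  simp [Ring.lie_def, Matrix.sub_apply, stmt0_lmul, stmt0_rmul]

open Matrix in
lemma stmt0_key {d : ℕ} (A : Matrix (Fin d) (Fin d) ℂ) (i j : Fin d) (hij : i ≠ j)
    (h : A i j ≠ 0) :
    Matrix.single i j (1 : ℂ) = (-(2 * A i j)⁻¹) •
      (⁅Matrix.single j j (1:ℂ), ⁅Matrix.single i i (1:ℂ), A⁆⁆ +
       ⁅Matrix.single i i (1:ℂ), ⁅Matrix.single j j (1:ℂ), ⁅Matrix.single i i (1:ℂ), A⁆⁆⁆) := by
  ext k l
  simp only [Matrix.smul_apply, Matrix.add_apply, stmt0_lieE, smul_eq_mul]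
  simp only [Matrix.single, of_apply, ite_and]
  split_ifs <;> subst_vars <;> simp_all <;> field_simp <;> ring

open Matrix in
lemma stmt0_diagE {d : ℕ} (k : Fin d) : (Matrix.single k k (1 : ℂ)).IsDiag := by
  intro a b hab
  simp only [Matrix.single, of_apply, ite_and]
  split_ifs with h1 h2
  · exact absurd (h1.symm.trans h2) hab
  · rfl
  · rfl

/-- Let `d ≥ 1` and `A` a `d × d` complex matrix. For every pair of indices
`i ≠ j` with `A i j ≠ 0`, the matrix unit `E i j` lies in the complex Lie subalgebra of
`gl(d, ℂ)` (matrices with the commutator bracket) generated by all diagonal matrices together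
with `A`; consequently this Lie subalgebra contains the (direct) sum of the space of diagonal
matrices and the root spaces `ℂ • E i j` for `(i, j)` ranging over the nonzero off-diagonal
index set of `A`. -/
theorem stmt_0 (d : ℕ) (hd : 1 ≤ d) (A : Matrix (Fin d) (Fin d) ℂ) :
    (∀ i j : Fin d, i ≠ j → A i j ≠ 0 →
      Matrix.single i j (1 : ℂ) ∈
        LieSubalgebra.lieSpan ℂ (Matrix (Fin d) (Fin d) ℂ)
          ({M : Matrix (Fin d) (Fin d) ℂ | M.IsDiag} ∪ {A})) ∧
    (Submodule.span ℂ ({M : Matrix (Fin d) (Fin d) ℂ | M.IsDiag} ∪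
        {M : Matrix (Fin d) (Fin d) ℂ | ∃ i j : Fin d, i ≠ j ∧ A i j ≠ 0 ∧
          ∃ c : ℂ, M = c • Matrix.single i j (1 : ℂ)}) ≤
      (LieSubalgebra.lieSpan ℂ (Matrix (Fin d) (Fin d) ℂ)
          ({M : Matrix (Fin d) (Fin d) ℂ | M.IsDiag} ∪ {A})).toSubmodule) := by
  set S := LieSubalgebra.lieSpan ℂ (Matrix (Fin d) (Fin d) ℂ)
    ({M : Matrix (Fin d) (Fin d) ℂ | M.IsDiag} ∪ {A}) with hS
  have hE : ∀ k : Fin d, Matrix.single k k (1 : ℂ) ∈ S := fun k =>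
    LieSubalgebra.subset_lieSpan (Or.inl (stmt0_diagE k))
  have hA : A ∈ S := LieSubalgebra.subset_lieSpan (Or.inr rfl)
  have h1 : ∀ i j : Fin d, i ≠ j → A i j ≠ 0 → Matrix.single i j (1 : ℂ) ∈ S := by
    intro i j hij hAij
    rw [stmt0_key A i j hij hAij]
    exact S.smul_mem _ (S.add_mem
      (S.lie_mem (hE j) (S.lie_mem (hE i) hA))
      (S.lie_mem (hE i) (S.lie_mem (hE j) (S.lie_mem (hE i) hA))))
  refine ⟨h1, ?_⟩
  rw [Submodule.span_le]
  rintro M (hM | ⟨i, j, hij, hAij, c, rfl⟩)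
  · exact LieSubalgebra.subset_lieSpan (Or.inl hM)
  · exact Submodule.smul_mem _ c (h1 i j hij hAij)
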